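/- Let $g\in\mathbb{R}^n$ with $g_n>0$ and $|g|>0$. Set $\xi^{(n)} = g/|g|$ and for $i=1,\dots,n-1$ set $\xi^{(i)} = (g_n e_i - g_i e_n)/|g_n e_i - g_i e_n|$, where $e_1,\dots,e_n$ is the standard basis. Then the determinant of the matrix with columns $\xi^{(1)},\dots,\xi^{(n-1)},\xi^{(n)}$ satisfies $\det(\xi^{(1)},\dots,\xi^{(n)}) \ge (g_n/|g|)^{n-2} > 0$. -/

import Mathlib

open Real Matrix

section aux
variable {m : ℕ} (g : Fin (m + 1) → ℝ)

noncomputable def Nmat : Matrix (Fin (m + 1)) (Fin (m + 1)) ℝ :=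
  Matrix.of fun i j =>
    Fin.lastCases (g i)
      (fun j' => g (Fin.last m) * (if i = j'.castSucc then 1 else 0)
        - g j'.castSucc * (if i = Fin.last m then 1 else 0)) j

noncomputable def Emat : Matrix (Fin (m + 1)) (Fin (m + 1)) ℝ :=
  Matrix.of fun i j =>
    if i = j then 1 else if j = Fin.last m then -g i / g (Fin.last m) else 0

noncomputable def Lmat : Matrix (Fin (m + 1)) (Fin (m + 1)) ℝ :=
  Matrix.of fun i j =>
    if j = Fin.last m then (if i = Fin.last m then (∑ k, g k ^ 2) / g (Fin.last m) else 0)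
    else if i = j then g (Fin.last m) else if i = Fin.last m then -g j else 0

lemma det_Emat : (Emat g).det = 1 := by
  rw [Matrix.det_of_upperTriangular]
  · simp [Emat]
  · intro i j hij
    have h1 : i ≠ j := fun h => absurd hij (by simp [h])
    have h2 : j ≠ Fin.last m := fun h => (show i ≤ Fin.last m from Fin.le_last i).not_gt (h ▸ hij)
    simp [Emat, h1, h2]

lemma lowerTri_Lmat : (Lmat g).BlockTriangular OrderDual.toDual := by
  intro i j hij
  have hij' : i < j := hij
  have h1 : i ≠ j := ne_of_lt hij'
  have h2 : i ≠ Fin.last m := fun h => (show j ≤ Fin.last m from Fin.le_last j).not_gt (h ▸ hij')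
  simp [Lmat, h1, h2]

lemma mul_Emat (hgm : g (Fin.last m) ≠ 0) : Nmat g * Emat g = Lmat g := by
  ext i k
  rw [Matrix.mul_apply]
  refine Fin.lastCases ?_ ?_ k
  · -- k = last
    have hsplit : ∀ j : Fin (m + 1), Nmat g i j * Emat g j (Fin.last m)
        = Fin.lastCases (g i)
            (fun j' => (g (Fin.last m) * (if i = j'.castSucc then 1 else 0)
              - g j'.castSucc * (if i = Fin.last m then 1 else 0)) *
              (-g j'.castSucc / g (Fin.last m))) j := by
      intro j
      refine Fin.lastCases ?_ ?_ j
      · simp [Nmat, Emat]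
      · intro j'
        have : j'.castSucc ≠ Fin.last m := (Fin.castSucc_lt_last j').ne
        simp [Nmat, Emat, this]
    rw [Finset.sum_congr rfl fun j _ => hsplit j]
    rw [Fin.sum_univ_castSucc]
    simp only [Fin.lastCases_castSucc, Fin.lastCases_last]
    refine Fin.lastCases ?_ ?_ i
    · -- i = last
      have : ∀ j' : Fin m, (g (Fin.last m) * (if Fin.last m = j'.castSucc then 1 else 0)
          - g j'.castSucc * (if (Fin.last m : Fin (m+1)) = Fin.last m then 1 else 0)) *
            (-g j'.castSucc / g (Fin.last m))
          = g j'.castSucc ^ 2 / g (Fin.last m) := by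
        intro j'
        have : (Fin.last m : Fin (m+1)) ≠ j'.castSucc := (Fin.castSucc_lt_last j').ne'
        rw [if_neg this, if_pos rfl]
        ring
      rw [Finset.sum_congr rfl fun j' _ => this j']
      rw [← Finset.sum_div]
      simp only [Lmat, Matrix.of_apply, if_pos rfl, ite_true]
      rw [Fin.sum_univ_castSucc]
      field_simp
    · -- i = castSucc i'
      intro i'
      have hne : i'.castSucc ≠ Fin.last m := (Fin.castSucc_lt_last i').ne
      have : ∀ j' : Fin m, (g (Fin.last m) * (if i'.castSucc = j'.castSucc then 1 else 0)
          - g j'.castSucc * (if i'.castSucc = Fin.last m then 1 else 0)) *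
            (-g j'.castSucc / g (Fin.last m))
          = if j' = i' then -g i'.castSucc else 0 := by
        intro j'
        rw [if_neg hne]
        rcases eq_or_ne j' i' with h | h
        · subst h
          rw [if_pos rfl, if_pos rfl]
          field_simp
          ring
        · rw [if_neg (show i'.castSucc ≠ j'.castSucc from
              fun hh => h (Fin.castSucc_injective m hh).symm), if_neg h]
          ring
      rw [Finset.sum_congr rfl fun j' _ => this j']
      rw [Finset.sum_ite_eq' Finset.univ i' (fun j' => -g i'.castSucc)]
      simp [Lmat, hne]
  · -- k = castSucc k'
    intro k'
    have hk : k'.castSucc ≠ Fin.last m := (Fin.castSucc_lt_last k').ne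
    have : ∀ j : Fin (m + 1), Nmat g i j * Emat g j k'.castSucc
        = if j = k'.castSucc then Nmat g i k'.castSucc else 0 := by
      intro j
      rcases eq_or_ne j (k'.castSucc) with h | h
      · subst h; simp [Emat]
      · simp [Emat, h, hk]
    rw [Finset.sum_congr rfl fun j _ => this j]
    rw [Finset.sum_ite_eq' Finset.univ (k'.castSucc) (fun _ => Nmat g i k'.castSucc)]
    simp only [Finset.mem_univ, if_pos]
    simp only [Nmat, Lmat, Matrix.of_apply, Fin.lastCases_castSucc, hk, if_false]
    rcases eq_or_ne i (k'.castSucc) with h | h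
    · subst h
      simp [(Fin.castSucc_lt_last k').ne]
    · rcases eq_or_ne i (Fin.last m) with h2 | h2
      · simp [h, h2, (Fin.castSucc_lt_last k').ne']
      · simp [h, h2]

lemma det_Nmat (hgm : g (Fin.last m) ≠ 0) :
    (Nmat g).det = g (Fin.last m) ^ m * (∑ k, g k ^ 2) / g (Fin.last m) := by
  have h1 : (Nmat g).det * (Emat g).det = (Lmat g).det := by
    rw [← Matrix.det_mul, mul_Emat g hgm]
  rw [det_Emat, mul_one] at h1
  rw [h1, Matrix.det_of_lowerTriangular _ (lowerTri_Lmat g)]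
  rw [Fin.prod_univ_castSucc]
  have : ∀ i : Fin m, Lmat g i.castSucc i.castSucc = g (Fin.last m) := by
    intro i
    simp [Lmat, (Fin.castSucc_lt_last i).ne]
  rw [Finset.prod_congr rfl fun i _ => this i]
  simp [Lmat, mul_div_assoc]

end aux

/-- For `g ∈ ℝⁿ` with `gₙ > 0`, the determinant of the matrix with columns
`ξ⁽¹⁾, …, ξ⁽ⁿ⁾` (where `ξ⁽ⁿ⁾ = g/|g|`, `ξ⁽ⁱ⁾ = (gₙ eᵢ - gᵢ eₙ)/|gₙ eᵢ - gᵢ eₙ|`)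
is at least `(gₙ/|g|)^{n-2} > 0`. -/
theorem stmt_5 (m : ℕ) (hm : 1 ≤ m) (g : EuclideanSpace ℝ (Fin (m + 1)))
    (hgn : 0 < g (Fin.last m)) (hg : 0 < ‖g‖) :
    let e : Fin (m + 1) → EuclideanSpace ℝ (Fin (m + 1)) := fun i => EuclideanSpace.single i 1
    let ξ : Fin (m + 1) → EuclideanSpace ℝ (Fin (m + 1)) :=
      Fin.lastCases (‖g‖⁻¹ • g)
        (fun i => ‖g (Fin.last m) • e i.castSucc - g i.castSucc • e (Fin.last m)‖⁻¹ •
          (g (Fin.last m) • e i.castSucc - g i.castSucc • e (Fin.last m)))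
    (g (Fin.last m) / ‖g‖) ^ (m - 1) ≤ (Matrix.of fun i j => ξ j i).det ∧
      0 < (g (Fin.last m) / ‖g‖) ^ (m - 1) := by
  intro e ξ
  refine ⟨?_, by positivity⟩
  set gm := g (Fin.last m) with hgmdef
  -- the scaling factors
  set c : Fin (m + 1) → ℝ := Fin.lastCases ‖g‖⁻¹
    (fun i => ‖gm • e i.castSucc - g i.castSucc • e (Fin.last m)‖⁻¹) with hc
  -- components of the columns
  have he_apply : ∀ (i k : Fin (m + 1)), e i k = if k = i then 1 else 0 := by
    intro i k; simp [e, EuclideanSpace.single_apply]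
  have hξ : ∀ (i j : Fin (m + 1)), ξ j i = c j * Nmat g i j := by
    intro i j
    refine Fin.lastCases ?_ ?_ j
    · simp [ξ, c, Nmat, hgmdef, PiLp.smul_apply]
    · intro j'
      simp only [ξ, c, Fin.lastCases_castSucc, Nmat, Matrix.of_apply, PiLp.smul_apply,
        PiLp.sub_apply, smul_eq_mul, he_apply, hgmdef]
  have hM : (Matrix.of fun i j => ξ j i).det = (∏ j, c j) * (Nmat g).det := by
    rw [show (Matrix.of fun i j => ξ j i) = Matrix.of fun i j => c j * Nmat g i j from by
      ext i j; exact hξ i j]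
    exact Matrix.det_mul_row c (Nmat g)
  -- norms
  have hnormsq : ‖g‖ ^ 2 = ∑ k, g k ^ 2 := by
    rw [EuclideanSpace.norm_eq]
    rw [Real.sq_sqrt (by positivity)]
    congr 1; ext k; rw [Real.norm_eq_abs, sq_abs]
  have hr : ∀ i : Fin m, ‖gm • e i.castSucc - g i.castSucc • e (Fin.last m)‖
      = Real.sqrt (gm ^ 2 + g i.castSucc ^ 2) := by
    intro i
    rw [EuclideanSpace.norm_eq]
    congr 1
    have : ∀ k : Fin (m + 1),
        ‖(gm • e i.castSucc - g i.castSucc • e (Fin.last m)) k‖ ^ 2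
        = (if k = i.castSucc then gm ^ 2 else 0) + (if k = Fin.last m then g i.castSucc ^ 2 else 0) := by
      intro k
      simp only [PiLp.smul_apply, PiLp.sub_apply, smul_eq_mul, he_apply, Real.norm_eq_abs, sq_abs]
      split_ifs with h1 h2
      · exact absurd (h1.symm.trans h2) (Fin.castSucc_lt_last i).ne
      all_goals ring
    rw [Finset.sum_congr rfl fun k _ => this k, Finset.sum_add_distrib,
      Finset.sum_ite_eq' Finset.univ _ (fun _ => gm ^ 2),
      Finset.sum_ite_eq' Finset.univ _ (fun _ => g i.castSucc ^ 2)]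
    simp
  have hrle : ∀ i : Fin m, ‖g‖⁻¹ ≤ ‖gm • e i.castSucc - g i.castSucc • e (Fin.last m)‖⁻¹ := by
    intro i
    rw [hr i]
    refine inv_anti₀ (by positivity) ?_
    rw [show ‖g‖ = Real.sqrt (‖g‖ ^ 2) from (Real.sqrt_sq hg.le).symm, hnormsq]
    apply Real.sqrt_le_sqrt
    have : gm ^ 2 + g i.castSucc ^ 2 = ∑ k ∈ ({i.castSucc, Fin.last m} : Finset (Fin (m+1))), g k ^ 2 := by
      rw [Finset.sum_pair (Fin.castSucc_lt_last i).ne]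
      ring
    rw [this]
    exact Finset.sum_le_sum_of_subset_of_nonneg (Finset.subset_univ _)
      (fun k _ _ => by positivity)
  -- put it together
  rw [hM, det_Nmat g hgn.ne', Fin.prod_univ_castSucc]
  simp only [c, Fin.lastCases_castSucc, Fin.lastCases_last]
  rw [← hnormsq]
  have key : (∏ i : Fin m, ‖g‖⁻¹) ≤ ∏ i : Fin m,
      ‖gm • e i.castSucc - g i.castSucc • e (Fin.last m)‖⁻¹ := by
    apply Finset.prod_le_prod (fun i _ => by positivity) (fun i _ => hrle i)
  have hfinal : (gm / ‖g‖) ^ (m - 1)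
      = (∏ i : Fin m, ‖g‖⁻¹) * ‖g‖⁻¹ * (gm ^ m * ‖g‖ ^ 2 / gm) := by
    rw [Finset.prod_const, Finset.card_univ, Fintype.card_fin]
    rw [div_pow]
    obtain ⟨m', rfl⟩ : ∃ m', m = m' + 1 := ⟨m - 1, by omega⟩
    simp only [Nat.add_sub_cancel]
    field_simp
    have h1 : ‖g‖ * ‖g‖⁻¹ = 1 := mul_inv_cancel₀ hg.ne'
    have h2 : ‖g‖ ^ m' * ‖g‖⁻¹ ^ m' = 1 := by rw [← mul_pow, h1, one_pow]
    linear_combination (-(gm * gm ^ m') * ‖g‖ ^ m' * ‖g‖⁻¹ ^ m') * h1 - (gm * gm ^ m') * h2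
  have hpos : (0:ℝ) < ‖g‖⁻¹ * (gm ^ m * ‖g‖ ^ 2 / gm) := by positivity
  rw [hfinal, ← hgmdef]
  calc (∏ i : Fin m, ‖g‖⁻¹) * ‖g‖⁻¹ * (gm ^ m * ‖g‖ ^ 2 / gm)
      = (∏ i : Fin m, ‖g‖⁻¹) * (‖g‖⁻¹ * (gm ^ m * ‖g‖ ^ 2 / gm)) := by ring
    _ ≤ (∏ i : Fin m, ‖gm • e i.castSucc - g i.castSucc • e (Fin.last m)‖⁻¹) *
        (‖g‖⁻¹ * (gm ^ m * ‖g‖ ^ 2 / gm)) := mul_le_mul_of_nonneg_right key hpos.le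
    _ = (∏ i : Fin m, ‖gm • e i.castSucc - g i.castSucc • e (Fin.last m)‖⁻¹) * ‖g‖⁻¹ *
        (gm ^ m * ‖g‖ ^ 2 / gm) := by ring
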